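/- Let X be a locally connected continuum, h : X → X a topologically transitive homeomorphism, and x ∈ X a fixed point of h. Then X ∖ {x} has only finitely many connected components; moreover, h permutes these components cyclically, and if n is their number then for each such component C the map h^n maps the closure of C onto itself and the restriction of h^n to the closure of C is topologically transitive. -/

import Mathlib

/-- Let `X` be a locally connected continuum, `h : X → X` a topologically transitive
homeomorphism and `x` a fixed point of `h`. Let `S` be the set of connected components
of `X \ {x}`. Then `S` is finite, `h` permutes the members of `S` cyclically (the image
of each component is a component, and any component can be mapped onto any other by an
iterate of `h`), and, `n` being the number of components, for every `C ∈ S` the map `h^n`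
maps the closure of `C` onto itself and its restriction to the closure of `C` is
topologically transitive. -/
theorem stmt_9 (X : Type*) [TopologicalSpace X] [CompactSpace X] [ConnectedSpace X]
    [LocallyConnectedSpace X] [TopologicalSpace.MetrizableSpace X] [Nonempty X]
    (h : X ≃ₜ X)
    (htrans : ∀ U V : Set X, IsOpen U → IsOpen V → U.Nonempty → V.Nonempty →
        ∃ n : ℕ, ((⇑h)^[n] '' U ∩ V).Nonempty)
    (x : X) (hx : h x = x)
    (S : Set (Set X)) (hS : S = {C | ∃ y : X, y ≠ x ∧ C = connectedComponentIn {x}ᶜ y}) :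
    S.Finite ∧
      (∀ C ∈ S, ⇑h '' C ∈ S) ∧
      (∀ C ∈ S, ∀ D ∈ S, ∃ k : ℕ, (⇑h)^[k] '' C = D) ∧
      (∀ C ∈ S,
        (⇑h)^[S.ncard] '' closure C = closure C ∧
        ∀ U V : Set X, IsOpen U → IsOpen V →
          (U ∩ closure C).Nonempty → (V ∩ closure C).Nonempty →
            ∃ k : ℕ, ((⇑h)^[S.ncard * k] '' (U ∩ closure C) ∩ V).Nonempty) := by
  classical
  letI : MetricSpace X := TopologicalSpace.metrizableSpaceMetric X
  subst hS
  set K : Set X := ({x}ᶜ : Set X) with hKdef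
  by_cases hX : ∃ y : X, y ≠ x
  case neg =>
    push_neg at hX
    have hSe : {C | ∃ y : X, y ≠ x ∧ C = connectedComponentIn K y} = (∅ : Set (Set X)) := by
      ext C
      simp only [Set.mem_setOf_eq, Set.mem_empty_iff_false, iff_false, not_exists]
      rintro y ⟨hy, -⟩
      exact hy (hX y)
    rw [hSe]
    refine ⟨Set.finite_empty, by simp, by simp, by simp⟩
  case pos =>
  obtain ⟨y₀, hy₀⟩ := hX
  -- basic facts
  have hKopen : IsOpen K := isOpen_compl_singleton
  have hfix : ∀ m, (⇑h)^[m] x = x := fun m => Function.iterate_fixed hx m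
  have hinj : ∀ m, Function.Injective ((⇑h)^[m]) := fun m => (h.injective).iterate m
  have hmemK : ∀ m, ∀ y, y ∈ K → (⇑h)^[m] y ∈ K := by
    intro m y hy hc
    apply hy
    simp only [Set.mem_singleton_iff] at hc ⊢
    exact hinj m (by rw [hc, hfix])
  have himadd : ∀ a b (A : Set X), (⇑h)^[a] '' ((⇑h)^[b] '' A) = (⇑h)^[a+b] '' A := by
    intro a b A
    rw [Function.iterate_add, Set.image_comp]
  have himgK : (⇑h) '' K = K := by
    rw [hKdef, Set.image_compl_eq h.bijective, Set.image_singleton, hx]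
  have hcomp : ∀ m, ∀ y, y ∈ K →
      (⇑h)^[m] '' connectedComponentIn K y = connectedComponentIn K ((⇑h)^[m] y) := by
    intro m
    induction m with
    | zero => intro y hy; simp
    | succ m ih =>
      intro y hy
      rw [Function.iterate_succ', Set.image_comp, ih y hy,
        h.image_connectedComponentIn (hmemK m y hy), himgK]
      rfl
  set S : Set (Set X) := {C | ∃ y : X, y ≠ x ∧ C = connectedComponentIn K y} with hSdef
  have hneK : ∀ y : X, y ≠ x ↔ y ∈ K := by
    intro y; simp [hKdef]
  have hopen : ∀ C ∈ S, IsOpen C := by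
    rintro C ⟨y, hy, rfl⟩
    exact hKopen.connectedComponentIn
  have hne : ∀ C ∈ S, C.Nonempty := by
    rintro C ⟨y, hy, rfl⟩
    exact ⟨y, mem_connectedComponentIn ((hneK y).1 hy)⟩
  have hsubK : ∀ C ∈ S, C ⊆ K := by
    rintro C ⟨y, hy, rfl⟩
    exact connectedComponentIn_subset _ _
  have himS : ∀ m, ∀ C ∈ S, (⇑h)^[m] '' C ∈ S := by
    rintro m C ⟨y, hy, rfl⟩
    refine ⟨(⇑h)^[m] y, (hneK _).2 (hmemK m y ((hneK y).1 hy)), ?_⟩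
    exact hcomp m y ((hneK y).1 hy)
  have heq_of_inter : ∀ C ∈ S, ∀ D ∈ S, (C ∩ D).Nonempty → C = D := by
    rintro C ⟨y, hy, rfl⟩ D ⟨z, hz, rfl⟩ ⟨w, hw1, hw2⟩
    rw [connectedComponentIn_eq hw1, ← connectedComponentIn_eq hw2]
  -- each component has two distinct points
  have htwo : ∀ C ∈ S, ∃ p q : X, p ∈ C ∧ q ∈ C ∧ p ≠ q := by
    intro C hC
    obtain ⟨p, hp⟩ := hne C hC
    by_contra hcon
    push_neg at hcon
    have hCp : C = {p} := by
      ext q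
      simp only [Set.mem_singleton_iff]
      constructor
      · intro hq
        by_contra hne'
        exact hne' (by
          have := hcon q p hq hp
          exact this)
      · rintro rfl; exact hp
    have hclopen : IsClopen ({p} : Set X) := ⟨isClosed_singleton, hCp ▸ hopen C hC⟩
    have : ({p} : Set X) = Set.univ := hclopen.eq_univ ⟨p, rfl⟩
    have hxp : x ∈ ({p} : Set X) := this ▸ Set.mem_univ x
    have : p ∈ K := hsubK C hC (hCp ▸ hp : p ∈ C)
    exact ((hneK p).2 this) (Set.mem_singleton_iff.1 hxp).symm
  -- return times ≥ 1
  have hret : ∀ C ∈ S, ∃ m, 1 ≤ m ∧ (⇑h)^[m] '' C = C := by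
    intro C hC
    obtain ⟨p, q, hp, hq, hpq⟩ := htwo C hC
    obtain ⟨U, V, hU, hV, hpU, hqV, hUV⟩ := t2_separation hpq
    obtain ⟨m, z, hz1, hz2⟩ := htrans (U ∩ C) (V ∩ C) (hU.inter (hopen C hC))
      (hV.inter (hopen C hC)) ⟨p, hpU, hp⟩ ⟨q, hqV, hq⟩
    have hm1 : 1 ≤ m := by
      rcases Nat.eq_zero_or_pos m with rfl | hm
      · simp only [Function.iterate_zero, Set.image_id, Set.image_id'] at hz1
        exact absurd (hUV.ne_of_mem hz1.1 hz2.1 rfl) (by simp)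
      · exact hm
    refine ⟨m, hm1, heq_of_inter _ (himS m C hC) _ hC ⟨z, ?_, hz2.2⟩⟩
    exact Set.image_mono (Set.inter_subset_right) hz1
  -- transitivity on components
  have hmap : ∀ C ∈ S, ∀ D ∈ S, ∃ k : ℕ, (⇑h)^[k] '' C = D := by
    intro C hC D hD
    obtain ⟨m, z, hz1, hz2⟩ := htrans C D (hopen C hC) (hopen D hD) (hne C hC) (hne D hD)
    exact ⟨m, heq_of_inter _ (himS m C hC) _ hD ⟨z, hz1, hz2⟩⟩
  -- the base component and its minimal period
  have hy₀K : y₀ ∈ K := (hneK y₀).1 hy₀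
  set C₀ : Set X := connectedComponentIn K y₀ with hC₀def
  have hC₀S : C₀ ∈ S := ⟨y₀, hy₀, rfl⟩
  have hex : ∃ m, 1 ≤ m ∧ (⇑h)^[m] '' C₀ = C₀ := hret C₀ hC₀S
  set p : ℕ := Nat.find hex with hpdef
  have hp1 : 1 ≤ p := (Nat.find_spec hex).1
  have hpfix : (⇑h)^[p] '' C₀ = C₀ := (Nat.find_spec hex).2
  have hpmin : ∀ m, m < p → ¬(1 ≤ m ∧ (⇑h)^[m] '' C₀ = C₀) := fun m hm => Nat.find_min hex hm
  have hper : ∀ a : ℕ, (⇑h)^[p * a] '' C₀ = C₀ := by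
    intro a
    induction a with
    | zero => simp
    | succ a ih =>
      have : p * (a + 1) = p + p * a := by ring
      rw [this, ← himadd p (p * a) C₀, ih, hpfix]
  have hmod : ∀ m : ℕ, (⇑h)^[m] '' C₀ = (⇑h)^[m % p] '' C₀ := by
    intro m
    conv_lhs => rw [← Nat.mod_add_div m p]
    rw [← himadd (m % p) (p * (m / p)) C₀, hper]
  -- S is exactly the orbit of C₀ over [0, p)
  have hSsub : S ⊆ (fun r => (⇑h)^[r] '' C₀) '' (Set.Iio p) := by
    intro D hD
    obtain ⟨k, hk⟩ := hmap C₀ hC₀S D hD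
    refine ⟨k % p, Nat.mod_lt k hp1, ?_⟩
    dsimp only
    rw [← hmod, hk]
  have hSsup : (fun r => (⇑h)^[r] '' C₀) '' (Set.Iio p) ⊆ S := by
    rintro D ⟨r, -, rfl⟩
    exact himS r C₀ hC₀S
  have hSeq : S = (fun r => (⇑h)^[r] '' C₀) '' (Set.Iio p) := le_antisymm hSsub hSsup
  have hfin : S.Finite := hSeq ▸ (Set.finite_Iio p).image _
  have hkey : ∀ a b : ℕ, a ≤ b → b < p → (⇑h)^[a] '' C₀ = (⇑h)^[b] '' C₀ → a = b := by
    intro a b hle hbp hab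
    by_contra hne'
    have hba : 1 ≤ b - a := by omega
    have h1 : (⇑h)^[a] '' ((⇑h)^[b-a] '' C₀) = (⇑h)^[a] '' C₀ := by
      rw [himadd, show a + (b - a) = b by omega]
      exact hab.symm
    have h2 : (⇑h)^[b-a] '' C₀ = C₀ :=
      Set.image_injective.2 (hinj a) h1
    exact hpmin (b - a) (by omega) ⟨hba, h2⟩
  have hinjOn : Set.InjOn (fun r => (⇑h)^[r] '' C₀) (Set.Iio p) := by
    intro a ha b hb hab
    have ha' : a < p := ha
    have hb' : b < p := hb
    dsimp only at hab
    rcases le_total a b with hle | hle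
    · exact hkey a b hle hb' hab
    · exact (hkey b a hle ha' hab.symm).symm
  have hncard : S.ncard = p := by
    rw [hSeq, Set.ncard_image_of_injOn hinjOn, ← Nat.card_coe_set_eq,
      Nat.card_eq_fintype_card, Fintype.card_ofFinset (H := fun _ => by simp), Nat.card_Iio]
  -- every component has period p, and p divides all return times
  have hCper : ∀ C ∈ S, (⇑h)^[p] '' C = C := by
    intro C hC
    obtain ⟨k, rfl⟩ : ∃ k, (⇑h)^[k] '' C₀ = C := hmap C₀ hC₀S C hC
    rw [himadd, show p + k = k + p by ring, ← himadd, hpfix]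
  have hdvd : ∀ C ∈ S, ∀ m, (⇑h)^[m] '' C = C → p ∣ m := by
    intro C hC m hm
    obtain ⟨k, rfl⟩ : ∃ k, (⇑h)^[k] '' C₀ = C := hmap C₀ hC₀S C hC
    rw [himadd, show m + k = k + m by ring, ← himadd] at hm
    have hmC₀ : (⇑h)^[m] '' C₀ = C₀ := Set.image_injective.2 (hinj k) hm
    rw [hmod] at hmC₀
    rcases Nat.eq_zero_or_pos (m % p) with h0 | hpos
    · exact Nat.dvd_of_mod_eq_zero h0
    · exact absurd ⟨hpos, hmC₀⟩ (hpmin _ (Nat.mod_lt m hp1))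
  -- closure commutes with iterates
  have hclos : ∀ m (A : Set X), (⇑h)^[m] '' closure A = closure ((⇑h)^[m] '' A) := by
    intro m
    induction m with
    | zero => simp
    | succ m ih =>
      intro A
      rw [Function.iterate_succ', Set.image_comp, ih A, h.image_closure,
        Set.image_comp]
  refine ⟨hfin, ?_, hmap, ?_⟩
  · intro C hC
    have := himS 1 C hC
    simpa using this
  · intro C hC
    constructor
    · rw [hncard, hclos, hCper C hC]
    · intro U V hU hV hUC hVC
      have hUC' : (U ∩ C).Nonempty := by
        obtain ⟨u, hu1, hu2⟩ := hUC
        exact mem_closure_iff.1 hu2 U hU hu1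
      have hVC' : (V ∩ C).Nonempty := by
        obtain ⟨v, hv1, hv2⟩ := hVC
        exact mem_closure_iff.1 hv2 V hV hv1
      obtain ⟨m, z, hz1, hz2⟩ := htrans (U ∩ C) (V ∩ C) (hU.inter (hopen C hC))
        (hV.inter (hopen C hC)) hUC' hVC'
      have hmC : (⇑h)^[m] '' C = C := by
        refine heq_of_inter _ (himS m C hC) _ hC ⟨z, ?_, hz2.2⟩
        exact Set.image_mono Set.inter_subset_right hz1
      obtain ⟨k, rfl⟩ := hdvd C hC m hmC
      refine ⟨k, z, ?_, hz2.1⟩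
      rw [hncard]
      exact Set.image_mono (Set.inter_subset_inter_right U subset_closure) hz1
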